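/- For every index i in {0,...,κ-1}, if α lies in the interval [A_i, A_{i+1}) (with A_κ = +∞), then the generalized survival function satisfies μ_𝒜(x, α) = min_{k ≤ i} μ(E_k^c). -/
import Mathlib


open scoped Classical

/-- `𝒜` is a family of conditional aggregation operators (FCA) with respect to the
collection `𝓔`: every operator is nonnegative, monotone in the coordinates of the
conditioning set, vanishes on the indicator of the complement, and `𝒜(·|∅) = 0`. -/
def IsFCA (n : ℕ) (𝓔 : Finset (Finset (Fin n)))
    (𝒜 : Finset (Fin n) → (Fin n → ℝ) → ℝ) : Prop :=
  (∀ E ∈ 𝓔, ∀ x : Fin n → ℝ, 0 ≤ 𝒜 E x) ∧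
  (∀ E ∈ 𝓔, E ≠ ∅ → ∀ x y : Fin n → ℝ, (∀ i ∈ E, x i ≤ y i) → 𝒜 E x ≤ 𝒜 E y) ∧
  (∀ E ∈ 𝓔, E ≠ ∅ → 𝒜 E (fun i => if i ∈ E then 0 else 1) = 0) ∧
  (∀ x : Fin n → ℝ, 𝒜 ∅ x = 0)

/-- `μ` is a monotone measure on the complements of the sets of `𝓔`:
`μ ∅ = 0`, nonnegative, and monotone. -/
def IsMonMeasure (n : ℕ) (𝓔 : Finset (Finset (Fin n)))
    (μ : Finset (Fin n) → ℝ) : Prop :=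
  μ ∅ = 0 ∧ (∀ E ∈ 𝓔, 0 ≤ μ Eᶜ) ∧
  (∀ E ∈ 𝓔, ∀ F ∈ 𝓔, Eᶜ ⊆ Fᶜ → μ Eᶜ ≤ μ Fᶜ)

/-- The generalized survival function
`μ_𝒜(x, α) = min { μ(Eᶜ) : 𝒜(x|E) ≤ α, E ∈ 𝓔 }`. -/
noncomputable def gsf {n : ℕ} (𝓔 : Finset (Finset (Fin n)))
    (𝒜 : Finset (Fin n) → (Fin n → ℝ) → ℝ)
    (μ : Finset (Fin n) → ℝ) (x : Fin n → ℝ) (α : ℝ) : ℝ :=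
  sInf {m : ℝ | ∃ E ∈ 𝓔, 𝒜 E x ≤ α ∧ m = μ Eᶜ}

/-- Theorem (zjednodusenie_def (i)): if `α ∈ [A_i, A_{i+1})` (with `A_κ = +∞`), then
`μ_𝒜(x, α) = min_{k ≤ i} μ(E_kᶜ)`. -/
theorem stmt0 {n κ : ℕ} (𝓔 : Finset (Finset (Fin n)))
    (𝒜 : Finset (Fin n) → (Fin n → ℝ) → ℝ) (μ : Finset (Fin n) → ℝ)
    (x : Fin n → ℝ)
    (hempty : ∅ ∈ 𝓔) (hU : (Finset.univ : Finset (Fin n)) ∈ 𝓔)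
    (hA : IsFCA n 𝓔 𝒜) (hμ : IsMonMeasure n 𝓔 μ) (hx : ∀ i, 0 ≤ x i)
    (hκ : 𝓔.card = κ)
    (Estar : Fin κ → Finset (Fin n))
    (hmem : ∀ i, Estar i ∈ 𝓔) (hinj : Function.Injective Estar)
    (hAmono : ∀ i j : Fin κ, i ≤ j → 𝒜 (Estar i) x ≤ 𝒜 (Estar j) x)
    (i : Fin κ) (α : ℝ)
    (hα₁ : 𝒜 (Estar i) x ≤ α)
    (hα₂ : ∀ h : (i : ℕ) + 1 < κ, α < 𝒜 (Estar ⟨(i : ℕ) + 1, h⟩) x) :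
    gsf 𝓔 𝒜 μ x α = sInf {m : ℝ | ∃ k : Fin κ, k ≤ i ∧ m = μ (Estar k)ᶜ} := by
  have hsurj : ∀ E ∈ 𝓔, ∃ k : Fin κ, Estar k = E := by
    intro E hE
    have himg : Finset.image Estar Finset.univ = 𝓔 := by
      apply Finset.eq_of_subset_of_card_le
      · intro F hF
        simp only [Finset.mem_image] at hF
        obtain ⟨k, _, rfl⟩ := hF
        exact hmem k
      · rw [Finset.card_image_of_injective _ hinj]
        simp [hκ]
    rw [← himg] at hE
    simpa using Finset.mem_image.mp hE
  unfold gsf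
  congr 1
  ext m
  constructor
  · rintro ⟨E, hE, hle, rfl⟩
    obtain ⟨k, rfl⟩ := hsurj E hE
    refine ⟨k, ?_, rfl⟩
    by_contra hk
    push_neg at hk
    have hik : (i : ℕ) + 1 ≤ (k : ℕ) := hk
    have hlt : (i : ℕ) + 1 < κ := lt_of_le_of_lt hik k.isLt
    have := hAmono ⟨(i : ℕ) + 1, hlt⟩ k (by exact hik)
    exact absurd (this.trans hle) (not_le.mpr (hα₂ hlt))
  · rintro ⟨k, hk, rfl⟩
    exact ⟨Estar k, hmem k, (hAmono k i hk).trans hα₁, rfl⟩
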